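/- Let D be a triangulated category with small coproducts and Q a set of objects such that Susp(Q) is an aisle in D whose coaisle Susp(Q)^⊥ is closed under small coproducts. Let D' := ⋃_{n∈ℤ} aisle(Q)[n]. Then an object P of D' is compact in D' if and only if it is compact in D. -/

import Mathlib

open CategoryTheory Limits Pretriangulated

universe v u

variable {C : Type u} [Category.{v} C] [Preadditive C] [Limits.HasZeroObject C]
  [HasShift C ℤ] [∀ n : ℤ, (shiftFunctor C n).Additive] [Pretriangulated C]

/-- A t-structure on the full triangulated subcategory `D'`, given by classes of objects;
with `D' = Set.univ` this is a t-structure on `C`. -/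
structure IsTStructureOn (D' U V : Set C) : Prop where
  subU : U ⊆ D'
  subV : V ⊆ D'
  isoU : ∀ ⦃X Y : C⦄, (X ≅ Y) → X ∈ U → Y ∈ D' → Y ∈ U
  isoV : ∀ ⦃X Y : C⦄, (X ≅ Y) → X ∈ V → Y ∈ D' → Y ∈ V
  shiftU : ∀ X ∈ U, X⟦(1 : ℤ)⟧ ∈ U
  shiftV : ∀ X ∈ V, X⟦(-1 : ℤ)⟧ ∈ V
  hom_zero : ∀ ⦃X Y : C⦄, X ∈ U → Y ∈ V → ∀ f : X ⟶ Y, f = 0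
  exists_triangle : ∀ M ∈ D', ∃ (X Y : C) (_ : X ∈ U) (_ : Y ∈ V)
    (f : X ⟶ M) (g : M ⟶ Y) (h : Y ⟶ X⟦(1 : ℤ)⟧), Triangle.mk f g h ∈ (distTriang C)

/-- `S` is a strictly full suspended subcategory of `C` containing `Q` and closed under
small coproducts: closed under isomorphisms, the shift `[1]`, extensions and coproducts. -/
def SuspClosed (Q S : Set C) : Prop :=
  Q ⊆ S ∧
  (∀ ⦃X Y : C⦄, (X ≅ Y) → X ∈ S → Y ∈ S) ∧
  (∀ X ∈ S, X⟦(1 : ℤ)⟧ ∈ S) ∧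
  (∀ T ∈ (distTriang C), T.obj₁ ∈ S → T.obj₃ ∈ S → T.obj₂ ∈ S) ∧
  (∀ (ι : Type v) (f : ι → C) (c : Cofan f), IsColimit c → (∀ i, f i ∈ S) → c.pt ∈ S)

/-- `Susp Q`: the smallest full suspended subcategory of `C` containing `Q` and closed
under small coproducts. -/
def Susp (Q : Set C) : Set C := ⋂₀ {S | SuspClosed Q S}

/-- `D' = ⋃_{n ∈ ℤ} aisle(Q)[n]`, the union of all shifts of the aisle generated by `Q`. -/
def rbHull (Q : Set C) : Set C := {M | ∃ n : ℤ, M⟦n⟧ ∈ Susp Q}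


/-- The right orthogonal of a class `S` of objects. -/
def rightOrth (S : Set C) : Set C := {M | ∀ Y ∈ S, ∀ f : Y ⟶ M, f = 0}

/-- The canonical map `⨁ᵢ Hom(P, fᵢ) ⟶ Hom(P, pt)` induced by a cofan. -/
noncomputable def sumToHom {ι : Type v} (f : ι → C) (c : Cofan f) (P : C) :
    DirectSum ι (fun i => P ⟶ f i) →+ (P ⟶ c.pt) :=
  letI := Classical.decEq ι
  DirectSum.toAddMonoid (fun i => AddMonoidHom.mk' (fun g => g ≫ c.inj i)
    (fun g₁ g₂ => Preadditive.add_comp _ _ _ _ _ _))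

/-- `c` is a coproduct of the family `f` *inside* the full subcategory determined by `S`. -/
def IsCoprodIn (S : Set C) {ι : Type v} (f : ι → C) (c : Cofan f) : Prop :=
  c.pt ∈ S ∧ (∀ i, f i ∈ S) ∧ ∀ c' : Cofan f, c'.pt ∈ S →
    ∃! m : c.pt ⟶ c'.pt, ∀ i, c.inj i ≫ m = c'.inj i

/-- `P` is compact in the full subcategory determined by `S`: `Hom(P, ?)` preserves
(i.e. turns into direct sums of abelian groups) all small coproducts that exist there. -/
def IsCompactIn (S : Set C) (P : C) : Prop :=
  ∀ (ι : Type v) (f : ι → C) (c : Cofan f), IsCoprodIn S f c →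
    Function.Bijective (sumToHom f c P)


section Aux

variable {C : Type u} [Category.{v} C] [Preadditive C] [Limits.HasZeroObject C]
  [HasShift C ℤ] [∀ n : ℤ, (shiftFunctor C n).Additive] [Pretriangulated C]

set_option linter.unusedSectionVars false

lemma suspClosed_susp (Q : Set C) : SuspClosed Q (Susp Q) := by
  refine ⟨?_, ?_, ?_, ?_, ?_⟩
  · intro x hx S hS; exact hS.1 hx
  · intro X Y e hX S hS; exact hS.2.1 e (hX S hS)
  · intro X hX S hS; exact hS.2.2.1 X (hX S hS)
  · intro T hT h1 h3 S hS; exact hS.2.2.2.1 T hT (h1 S hS) (h3 S hS)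
  · intro ι f c hc hf S hS; exact hS.2.2.2.2 ι f c hc (fun i => hf i S hS)

noncomputable def isColimit_shiftCofan {ι : Type v} {f : ι → C} (c : Cofan f)
    (hc : IsColimit c) (n : ℤ) :
    IsColimit (Cofan.mk (c.pt⟦n⟧) (fun i => (c.inj i)⟦n⟧')) := by
  let adj : shiftFunctor C n ⊣ shiftFunctor C (-n) := (shiftEquiv C n).toAdjunction
  refine mkCofanColimit _
    (fun t => (adj.homEquiv _ _).symm
      (Cofan.IsColimit.desc hc (fun i => adj.homEquiv _ _ (t.inj i)))) ?_ ?_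
  · intro t i
    show (shiftFunctor C n).map (c.inj i) ≫ (adj.homEquiv _ _).symm _ = t.inj i
    rw [Adjunction.homEquiv_counit, ← Functor.map_comp_assoc, Cofan.IsColimit.fac hc,
      ← Adjunction.homEquiv_counit, Equiv.symm_apply_apply]
  · intro t m hm
    refine ((Equiv.symm_apply_eq _).mpr ?_).symm
    refine Cofan.IsColimit.hom_ext hc _ _ (fun i => ?_)
    rw [Cofan.IsColimit.fac hc, ← hm i]
    exact adj.homEquiv_naturality_left _ _

lemma shift_hom_zero {P M : C} (n : ℤ) (h : ∀ g' : P⟦n⟧ ⟶ M⟦n⟧, g' = 0) (g : P ⟶ M) :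
    g = 0 := by
  haveI : (shiftFunctor C n).IsEquivalence := (shiftEquiv C n).isEquivalence_functor
  apply (shiftFunctor C n).map_injective
  rw [Functor.map_zero]
  exact h _

lemma exists_truncation {Q V : Set C} (hV : IsTStructureOn Set.univ (Susp Q) V) (X : C)
    (n : ℤ) :
    ∃ (A B : C) (α : A ⟶ X) (β : X ⟶ B) (γ : B ⟶ A⟦(1:ℤ)⟧),
      Triangle.mk α β γ ∈ (distTriang C) ∧ A⟦n⟧ ∈ Susp Q ∧ B⟦n⟧ ∈ V := by
  obtain ⟨A', B', hA', hB', a, b, g, hT⟩ := hV.exists_triangle (X⟦n⟧) trivial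
  have hT₀ : (Triangle.shiftFunctor C (-n)).obj (Triangle.mk a b g) ∈ distTriang C :=
    Triangle.shift_distinguished _ hT (-n)
  set T₀ := (Triangle.shiftFunctor C (-n)).obj (Triangle.mk a b g) with hT₀def
  let e : ((X⟦n⟧)⟦(-n : ℤ)⟧) ≅ X := (shiftFunctorCompIsoId C n (-n) (add_neg_cancel n)).app X
  refine ⟨A'⟦(-n : ℤ)⟧, B'⟦(-n : ℤ)⟧, T₀.mor₁ ≫ e.hom, e.inv ≫ T₀.mor₂, T₀.mor₃,
    isomorphic_distinguished _ hT₀ _ ?_, ?_, ?_⟩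
  · exact Triangle.isoMk _ _ (Iso.refl _) e.symm (Iso.refl _)
      (by show (T₀.mor₁ ≫ e.hom) ≫ e.inv = 𝟙 _ ≫ T₀.mor₁
          exact (Category.assoc _ _ _).trans ((congrArg _ e.hom_inv_id).trans
            ((Category.comp_id _).trans (Category.id_comp _).symm)))
      (by show (e.inv ≫ T₀.mor₂) ≫ 𝟙 _ = e.inv ≫ T₀.mor₂
          rw [Category.comp_id])
      (by show T₀.mor₃ ≫ (shiftFunctor C 1).map (𝟙 _) = 𝟙 _ ≫ T₀.mor₃
          rw [CategoryTheory.Functor.map_id, Category.comp_id, Category.id_comp])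
  · exact (suspClosed_susp Q).2.1
      ((shiftFunctorCompIsoId C (-n) n (neg_add_cancel n)).app A').symm hA'
  · exact hV.isoV ((shiftFunctorCompIsoId C (-n) n (neg_add_cancel n)).app B').symm hB' trivial

lemma mem_susp_of_homzero {Q V : Set C} (hV : IsTStructureOn Set.univ (Susp Q) V) (M : C)
    (hM : ∀ V' ∈ V, ∀ g : M ⟶ V', g = 0) : M ∈ Susp Q := by
  obtain ⟨A, B, hA, hB, a, b, g, hT⟩ := hV.exists_triangle M trivial
  have hb : b = 0 := hM B hB b
  have hzB : IsZero B := by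
    obtain ⟨k, hk⟩ := Triangle.yoneda_exact₂ _ (rot_of_distTriang _ hT) (𝟙 B)
      (by show b ≫ 𝟙 B = 0; rw [hb, zero_comp])
    have hk0 : k = 0 := hV.hom_zero ((suspClosed_susp Q).2.2.1 A hA) hB k
    rw [IsZero.iff_id_eq_zero, hk, hk0]; exact comp_zero
  have : IsIso a := (Triangle.isZero₃_iff_isIso₁ _ hT).1 hzB
  exact (suspClosed_susp Q).2.1 (asIso a) hA

lemma sumToHom_of {ι : Type v} (f : ι → C) (c : Cofan f) (P : C) [DecidableEq ι]
    (i : ι) (g : P ⟶ f i) :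
    sumToHom f c P (DirectSum.of (fun i => P ⟶ f i) i g) = g ≫ c.inj i := by
  unfold sumToHom
  exact DirectSum.toAddMonoid_of
    (fun i => AddMonoidHom.mk' (fun g => g ≫ c.inj i)
      (fun g₁ g₂ => Preadditive.add_comp _ _ _ _ _ _)) i g

end Aux

/-- **Compactness in the right bounded hull.**
Let `C` be a triangulated category with small coproducts and `Q` a set of objects such that
`Susp Q` is an aisle in `C` whose coaisle `Susp(Q)^⊥` is closed under small coproducts.
Let `D' := ⋃_{n∈ℤ} aisle(Q)[n]`.  Then an object `P` of `D'` is compact in `D'` if and only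
if it is compact in `C`. -/
theorem stmt6 [HasCoproducts.{v} C] (Q : Set C)
    (haisle : ∃ V, IsTStructureOn Set.univ (Susp Q) V)
    (hcoprod : ∀ (ι : Type v) (f : ι → C) (c : Cofan f), IsColimit c →
      (∀ i, f i ∈ rightOrth (Susp Q)) → c.pt ∈ rightOrth (Susp Q)) :
    ∀ P ∈ rbHull Q, (IsCompactIn (rbHull Q) P ↔ IsCompactIn Set.univ P) := by
    classical
  obtain ⟨V, hV⟩ := haisle
  have hU := suspClosed_susp Q
  intro P hP
  constructor
  · -- compact in D' → compact in C
    intro hcomp ι f c hc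
    obtain ⟨n, hPn⟩ := hP
    have hcol : IsColimit c := mkCofanColimit c
      (fun t => (hc.2.2 t trivial).choose)
      (fun t i => (hc.2.2 t trivial).choose_spec.1 i)
      (fun t m hm => (hc.2.2 t trivial).choose_spec.2 m hm)
    constructor
    · -- injectivity
      rw [injective_iff_map_eq_zero]
      intro x hx
      have key : ∀ (x : DirectSum ι (fun i => P ⟶ f i)) (j : ι),
          (sumToHom f c P) x ≫ Cofan.IsColimit.desc hcol
            (fun i => if h : i = j then eqToHom (by rw [h]) else 0) = x j := by
        intro x j
        induction x using DirectSum.induction_on with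
        | zero => simp
        | of i g =>
          rw [sumToHom_of, Category.assoc, Cofan.IsColimit.fac hcol, DirectSum.of_apply]
          by_cases h : i = j
          · subst h; simp
          · simp [h]
        | add y z hy hz =>
          rw [map_add, Preadditive.add_comp, hy, hz]
          simp [DirectSum.add_apply]
      refine DFinsupp.ext (fun j => ?_)
      have := key x j
      rw [hx, zero_comp] at this
      exact this.symm
    · -- surjectivity
      intro u
      choose A B α β γ hdist hAU hBV using fun i => exists_truncation hV (f i) n
      have hcolA : IsColimit (Cofan.mk (∐ A) (Sigma.ι A)) := coproductIsCoproduct A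
      have hAD : (∐ A) ∈ rbHull Q :=
        ⟨n, hU.2.2.2.2 ι _ _ (isColimit_shiftCofan _ hcolA n) hAU⟩
      have hcpA : IsCoprodIn (rbHull Q) A (Cofan.mk (∐ A) (Sigma.ι A)) := by
        refine ⟨hAD, fun i => ⟨n, hAU i⟩, fun c' _ => ?_⟩
        exact ⟨hcolA.desc c', fun i => hcolA.fac c' ⟨i⟩,
          fun m hm => hcolA.uniq c' m (fun ⟨i⟩ => hm i)⟩
      have hbijA := hcomp ι A (Cofan.mk (∐ A) (Sigma.ι A)) hcpA
      set Dα : (∐ A) ⟶ c.pt := Sigma.desc (fun i => α i ≫ c.inj i) with hDα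
      obtain ⟨Z, q, r, hD⟩ := Pretriangulated.distinguished_cocone_triangle Dα
      have hsq : ∀ i, ∃ ci : B i ⟶ Z, β i ≫ ci = c.inj i ≫ q := by
        intro i
        obtain ⟨ci, h1, -⟩ := Pretriangulated.complete_distinguished_triangle_morphism
          (Triangle.mk (α i) (β i) (γ i)) (Triangle.mk Dα q r) (hdist i) hD
          (Sigma.ι A i) (c.inj i) (by simp [hDα]; exact (Sigma.ι_desc (fun i => α i ≫ c.inj i) i).symm)
        exact ⟨ci, h1⟩
      choose cZ hcZ using hsq
      set w : c.pt ⟶ (∐ B) := Cofan.IsColimit.desc hcol (fun i => β i ≫ Sigma.ι B i) with hw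
      have hqf : w ≫ Sigma.desc cZ = q := by
        refine Cofan.IsColimit.hom_ext hcol _ _ (fun i => ?_)
        rw [hw, ← Category.assoc, Cofan.IsColimit.fac hcol, Category.assoc, Sigma.ι_desc,
          hcZ i]
      have huw : u ≫ w = 0 := by
        have hBW : (((∐ B) : C)⟦n⟧) ∈ rightOrth (Susp Q) :=
          hcoprod ι _ _
            (isColimit_shiftCofan (Cofan.mk (∐ B) (Sigma.ι B)) (coproductIsCoproduct B) n)
            (fun i Y hY g => hV.hom_zero hY (hBV i) g)
        exact shift_hom_zero n (fun g' => hBW _ hPn g') _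
      have huq : u ≫ q = 0 := by rw [← hqf, ← Category.assoc, huw, zero_comp]
      obtain ⟨v, hv⟩ := Pretriangulated.Triangle.coyoneda_exact₂ _ hD u huq
      obtain ⟨x, hx⟩ := hbijA.2 v
      have key : ∀ x : DirectSum ι (fun i => P ⟶ A i), ∃ y,
          sumToHom f c P y = sumToHom A (Cofan.mk (∐ A) (Sigma.ι A)) P x ≫ Dα := by
        intro x
        induction x using DirectSum.induction_on with
        | zero => exact ⟨0, by simp⟩
        | of i g =>
          refine ⟨DirectSum.of (fun i => P ⟶ f i) i (g ≫ α i), ?_⟩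
          rw [sumToHom_of, sumToHom_of]
          show (g ≫ α i) ≫ c.inj i = (g ≫ Sigma.ι A i) ≫ Dα
          rw [Category.assoc, Category.assoc]
          congr 1
          simp [hDα]
        | add y z hy hz =>
          obtain ⟨y', hy'⟩ := hy; obtain ⟨z', hz'⟩ := hz
          exact ⟨y' + z', by rw [map_add, map_add, Preadditive.add_comp, hy', hz']⟩
      obtain ⟨y, hy⟩ := key x
      exact ⟨y, by rw [hy, hx]; exact hv.symm⟩
  · -- compact in C → compact in D'
    intro hcomp ι f c hc
    obtain ⟨N, hcN⟩ := hc.1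
    have hret : ∀ i, ∃ r : c.pt ⟶ f i, c.inj i ≫ r = 𝟙 (f i) := by
      intro i
      obtain ⟨m, hm, -⟩ := hc.2.2
        (Cofan.mk (f i) (fun j => if h : j = i then eqToHom (by rw [h]) else 0)) (hc.2.1 i)
      refine ⟨m, ?_⟩
      have := hm i
      simpa using this
    choose rt hrt using hret
    have hfU : ∀ i, ((f i)⟦N⟧) ∈ Susp Q := by
      intro i
      refine mem_susp_of_homzero hV _ (fun V' hV' g => ?_)
      have h1 : (rt i)⟦N⟧' ≫ g = 0 := hV.hom_zero hcN hV' _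
      calc g = 𝟙 _ ≫ g := by rw [Category.id_comp]
        _ = (c.inj i ≫ rt i)⟦N⟧' ≫ g := by rw [hrt i, CategoryTheory.Functor.map_id]
        _ = (c.inj i)⟦N⟧' ≫ ((rt i)⟦N⟧' ≫ g) := by
              rw [Functor.map_comp, Category.assoc]
        _ = 0 := by rw [h1, comp_zero]
    have hc₀ : IsColimit (Cofan.mk (∐ f) (Sigma.ι f)) := coproductIsCoproduct f
    have hfD : ((∐ f) : C) ∈ rbHull Q :=
      ⟨N, hU.2.2.2.2 ι _ _ (isColimit_shiftCofan _ hc₀ N) hfU⟩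
    set u : (∐ f) ⟶ c.pt := Sigma.desc c.inj with hu
    obtain ⟨v, hv, -⟩ := hc.2.2 (Cofan.mk (∐ f) (Sigma.ι f)) hfD
    have hvu : v ≫ u = 𝟙 c.pt := by
      obtain ⟨m, hm, hmu⟩ := hc.2.2 c hc.1
      rw [hmu (v ≫ u) (fun i => by
            rw [← Category.assoc, hv i, hu]; simp),
          hmu (𝟙 _) (fun i => by rw [Category.comp_id])]
    refine hcomp ι f c ⟨trivial, fun _ => trivial, fun c' _ => ?_⟩
    refine ⟨v ≫ Sigma.desc c'.inj, fun i => by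
      rw [← Category.assoc, hv i]; simp, fun m hm => ?_⟩
    have hum : u ≫ m = Sigma.desc c'.inj := by
      refine Sigma.hom_ext _ _ (fun i => ?_)
      rw [← Category.assoc]
      simp [hu, hm i]
    rw [← Category.id_comp m, ← hvu, Category.assoc, hum]
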